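/- For every type X equipped with an equivalence relation ≈ (a Setoid structure on X), the lifted relation on rational step functions defined by f ≍ g := f {≈} g is an equivalence relation on S X; in particular it is reflexive, symmetric and transitive. -/

import Mathlib

set_option linter.unusedVariables false

/-- Rationals strictly between 0 and 1. -/
abbrev OO : Type := {q : ℚ // 0 < q ∧ q < 1}

/-- Rational step functions on the unit interval with values in `X`. -/
inductive S (X : Type) : Type
  | const : X → S X
  | glue : OO → S X → S X → S X

namespace S

def divO (a o : OO) (h : a.1 < o.1) : OO :=
  ⟨a.1 / o.1, div_pos a.2.1 o.2.1, (div_lt_one o.2.1).2 h⟩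

def subO (a o : OO) (h : o.1 < a.1) : OO :=
  ⟨(a.1 - o.1) / (1 - o.1),
    div_pos (by linarith) (by linarith [o.2.2]),
    (div_lt_one (by linarith [o.2.2])).2 (by linarith [a.2.2])⟩

/-- Left split: the part of the step function on `[0,a]`, rescaled to `[0,1]`. -/
def splitL {X : Type} : S X → OO → S X
  | const x, _ => const x
  | glue o f g, a =>
      if h : a.1 < o.1 then splitL f (divO a o h)
      else if h' : o.1 < a.1 then glue (divO o a h') f (splitL g (subO a o h'))
      else f

/-- Right split: the part of the step function on `[a,1]`, rescaled to `[0,1]`. -/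
def splitR {X : Type} : S X → OO → S X
  | const x, _ => const x
  | glue o f g, a =>
      if h : a.1 < o.1 then glue (subO o a h) (splitR f (divO a o h)) g
      else if h' : o.1 < a.1 then splitR g (subO a o h')
      else g

/-- The catamorphism (fold) for step functions. -/
def fold {X Y : Type} (φ : X → Y) (ψ : OO → Y → Y → Y) : S X → Y
  | const x => φ x
  | glue o f g => ψ o (fold φ ψ f) (fold φ ψ g)

/-- `map` for step functions. -/
def mapS {X Y : Type} (f : X → Y) : S X → S Y
  | const x => const (f x)
  | glue o l r => glue o (mapS f l) (mapS f r)

/-- The applicative `ap` (pointwise application) for step functions. -/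
def ap {X Y : Type} : S (X → Y) → S X → S Y
  | const f, x => mapS f x
  | glue o fl fr, x => glue o (ap fl (splitL x o)) (ap fr (splitR x o))

/-- Binary map. -/
def map2 {X Y Z : Type} (f : X → Y → Z) (a : S X) (b : S Y) : S Z :=
  ap (mapS f a) b

/-- `fold⋆`: a step function of propositions holds everywhere. -/
def foldStar : S Prop → Prop := fold id (fun _ p q => p ∧ q)

/-- Lifting of a relation to step functions: it holds pointwise everywhere. -/
def liftRel {X Y : Type} (R : X → Y → Prop) (f : S X) (g : S Y) : Prop :=
  foldStar (map2 R f g)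

/-- The equivalence `≍` on step functions: the lifting of equality. -/
def equivS {X : Type} (f g : S X) : Prop := liftRel Eq f g

def foldSup : S ℚ → ℚ := fold id (fun _ x y => max x y)

def foldAffine : S ℚ → ℚ := fold id (fun o x y => o.1 * x + (1 - o.1) * y)

def normInf (f : S ℚ) : ℚ := foldSup (mapS (fun q => |q|) f)

def normOne (f : S ℚ) : ℚ := foldAffine (mapS (fun q => |q|) f)

def dInf (f g : S ℚ) : ℚ := normInf (map2 (· - ·) f g)

def dOne (f g : S ℚ) : ℚ := normOne (map2 (· - ·) f g)

end S

open S

namespace S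
variable {X Y : Type}

@[simp] lemma splitL_const (x : X) (a : OO) : splitL (const x) a = const x := rfl
@[simp] lemma splitR_const (x : X) (a : OO) : splitR (const x) a = const x := rfl

lemma splitL_glue_lt {o a : OO} (h : a.1 < o.1) (f g : S X) :
    splitL (glue o f g) a = splitL f (divO a o h) := by
  simp only [splitL, dif_pos h]

lemma splitL_glue_gt {o a : OO} (h : o.1 < a.1) (f g : S X) :
    splitL (glue o f g) a = glue (divO o a h) f (splitL g (subO a o h)) := by
  simp only [splitL, dif_neg (not_lt.2 h.le), dif_pos h]

lemma splitL_glue_eq {o a : OO} (h : a.1 = o.1) (f g : S X) :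
    splitL (glue o f g) a = f := by
  simp only [splitL, dif_neg (not_lt.2 h.ge), dif_neg (not_lt.2 h.le)]

lemma splitR_glue_lt {o a : OO} (h : a.1 < o.1) (f g : S X) :
    splitR (glue o f g) a = glue (subO o a h) (splitR f (divO a o h)) g := by
  simp only [splitR, dif_pos h]

lemma splitR_glue_gt {o a : OO} (h : o.1 < a.1) (f g : S X) :
    splitR (glue o f g) a = splitR g (subO a o h) := by
  simp only [splitR, dif_neg (not_lt.2 h.le), dif_pos h]

lemma splitR_glue_eq {o a : OO} (h : a.1 = o.1) (f g : S X) :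
    splitR (glue o f g) a = g := by
  simp only [splitR, dif_neg (not_lt.2 h.ge), dif_neg (not_lt.2 h.le)]

lemma OO.ext {a b : OO} (h : a.1 = b.1) : a = b := Subtype.ext h

end S
namespace S
variable {X Y : Type}

lemma splitL_splitL : ∀ (h : S X) {a b : OO} (hab : a.1 < b.1),
    splitL (splitL h b) (divO a b hab) = splitL h a
  | const x, a, b, hab => rfl
  | glue o hl hr, a, b, hab => by
    have ob1 := o.2.1; have ob2 := o.2.2
    have ab1 := a.2.1; have ab2 := a.2.2
    have bb1 := b.2.1; have bb2 := b.2.2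
    rcases lt_trichotomy b.1 o.1 with hbo | hbo | hbo
    · have hao : a.1 < o.1 := hab.trans hbo
      rw [splitL_glue_lt hbo, splitL_glue_lt hao,
        show divO a b hab = divO (divO a o hao) (divO b o hbo)
          (by simp only [divO]; rw [div_lt_div_iff₀ (by positivity) (by positivity)]; nlinarith)
          from OO.ext (by simp only [divO]; field_simp),
        splitL_splitL hl]
    · have hao : a.1 < o.1 := hab.trans_eq hbo
      rw [splitL_glue_eq hbo, splitL_glue_lt hao]
      congr 1
      exact OO.ext (by simp only [divO, hbo])
    · rw [splitL_glue_gt hbo]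
      rcases lt_trichotomy a.1 o.1 with hao | hao | hao
      · have h1 : (divO a b hab).1 < (divO o b hbo).1 := by
          simp only [divO]; rw [div_lt_div_iff₀ (by positivity) (by positivity)]; nlinarith
        rw [splitL_glue_lt h1, splitL_glue_lt hao]
        congr 1
        exact OO.ext (by simp only [divO]; field_simp)
      · have h1 : (divO a b hab).1 = (divO o b hbo).1 := by simp only [divO, hao]
        rw [splitL_glue_eq h1, splitL_glue_eq hao]
      · have h1 : (divO o b hbo).1 < (divO a b hab).1 := by
          simp only [divO]; rw [div_lt_div_iff₀ (by positivity) (by positivity)]; nlinarith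
        rw [splitL_glue_gt h1, splitL_glue_gt hao]
        have hsub : (subO a o hao).1 < (subO b o hbo).1 := by
          simp only [subO]; rw [div_lt_div_iff₀ (by linarith) (by linarith)]; nlinarith
        congr 1
        · exact OO.ext (by simp only [divO]; field_simp)
        · rw [show subO (divO a b hab) (divO o b hbo) h1
              = divO (subO a o hao) (subO b o hbo) hsub from OO.ext
              (by
                have e1 : b.1 ≠ 0 := ne_of_gt bb1
                have e2 : (1:ℚ) - o.1 ≠ 0 := by linarith
                have e3 : b.1 - o.1 ≠ 0 := by linarith
                have e4 : (0:ℚ) < 1 - o.1/b.1 := by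
                  rw [sub_pos, div_lt_one bb1]; exact hbo
                simp only [divO, subO]
                field_simp),
            splitL_splitL hr]

end S
namespace S
variable {X Y : Type}

lemma splitR_splitR : ∀ (h : S X) {a b : OO} (hab : a.1 < b.1),
    splitR (splitR h a) (subO b a hab) = splitR h b
  | const x, a, b, hab => rfl
  | glue o hl hr, a, b, hab => by
    have ob1 := o.2.1; have ob2 := o.2.2
    have ab1 := a.2.1; have ab2 := a.2.2
    have bb1 := b.2.1; have bb2 := b.2.2
    rcases lt_trichotomy a.1 o.1 with hao | hao | hao
    · rw [splitR_glue_lt hao]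
      rcases lt_trichotomy b.1 o.1 with hbo | hbo | hbo
      · have h1 : (subO b a hab).1 < (subO o a hao).1 := by
          simp only [subO]; rw [div_lt_div_iff₀ (by linarith) (by linarith)]; nlinarith
        rw [splitR_glue_lt h1, splitR_glue_lt hbo]
        have hq : (divO a o hao).1 < (divO b o hbo).1 := by
          simp only [divO]; rw [div_lt_div_iff₀ (by positivity) (by positivity)]; nlinarith
        congr 1
        · exact OO.ext (by
            have e2 : (1:ℚ) - a.1 ≠ 0 := by linarith
            have e4 : (0:ℚ) < 1 - (b.1 - a.1)/(1 - a.1) := by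
              rw [sub_pos, div_lt_one (by linarith)]; linarith
            simp only [subO]; field_simp; try ring)
        · rw [show divO (subO b a hab) (subO o a hao) h1
              = subO (divO b o hbo) (divO a o hao) hq from OO.ext (by
                have e1 : o.1 ≠ 0 := ne_of_gt ob1
                have e2 : (1:ℚ) - a.1 ≠ 0 := by linarith
                have e3 : o.1 - a.1 ≠ 0 := by linarith
                have e4 : (0:ℚ) < 1 - a.1/o.1 := by
                  rw [sub_pos, div_lt_one ob1]; exact hao
                simp only [divO, subO]; field_simp; try ring),
            splitR_splitR hl]
      · have h1 : (subO b a hab).1 = (subO o a hao).1 := by simp only [subO, hbo]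
        rw [splitR_glue_eq h1, splitR_glue_eq hbo]
      · have h1 : (subO o a hao).1 < (subO b a hab).1 := by
          simp only [subO]; rw [div_lt_div_iff₀ (by linarith) (by linarith)]; nlinarith
        rw [splitR_glue_gt h1, splitR_glue_gt hbo]
        congr 1
        exact OO.ext (by
          have e2 : (1:ℚ) - a.1 ≠ 0 := by linarith
          have e3 : (0:ℚ) < 1 - (o.1 - a.1)/(1 - a.1) := by
            rw [sub_pos, div_lt_one (by linarith)]; linarith
          have e5 : (1:ℚ) - o.1 ≠ 0 := by linarith
          simp only [subO]; field_simp; ring_nf; field_simp; ring)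
    · have hob : o.1 < b.1 := hao ▸ hab
      rw [splitR_glue_eq hao, splitR_glue_gt hob]
      congr 1
      exact OO.ext (by simp only [subO, hao])
    · have hob : o.1 < b.1 := hao.trans hab
      rw [splitR_glue_gt hao,
        show subO b a hab = subO (subO b o hob) (subO a o hao)
          (by simp only [subO]; rw [div_lt_div_iff₀ (by linarith) (by linarith)]; nlinarith)
          from OO.ext (by
            have e2 : (1:ℚ) - o.1 ≠ 0 := by linarith
            have e3 : (0:ℚ) < 1 - (a.1 - o.1)/(1 - o.1) := by
              rw [sub_pos, div_lt_one (by linarith)]; linarith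
            simp only [subO]; field_simp; try ring),
        splitR_splitR hr, splitR_glue_gt hob]

end S
namespace S
variable {X Y : Type}

lemma splitR_splitL : ∀ (h : S X) {a b : OO} (hab : a.1 < b.1),
    splitR (splitL h b) (divO a b hab) = splitL (splitR h a) (subO b a hab)
  | const x, a, b, hab => rfl
  | glue o hl hr, a, b, hab => by
    have ob1 := o.2.1; have ob2 := o.2.2
    have ab1 := a.2.1; have ab2 := a.2.2
    have bb1 := b.2.1; have bb2 := b.2.2
    rcases lt_trichotomy b.1 o.1 with hbo | hbo | hbo
    · have hao : a.1 < o.1 := hab.trans hbo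
      have h' : (divO a o hao).1 < (divO b o hbo).1 := by
        simp only [divO]; rw [div_lt_div_iff₀ (by positivity) (by positivity)]; nlinarith
      have h2 : (subO b a hab).1 < (subO o a hao).1 := by
        simp only [subO]; rw [div_lt_div_iff₀ (by linarith) (by linarith)]; nlinarith
      rw [splitL_glue_lt hbo, splitR_glue_lt hao, splitL_glue_lt h2,
        show divO a b hab = divO (divO a o hao) (divO b o hbo) h' from OO.ext
          (by simp only [divO]; field_simp),
        splitR_splitL hl]
      congr 1
      exact OO.ext (by
        have e1 : o.1 ≠ 0 := ne_of_gt ob1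
        have e2 : (1:ℚ) - a.1 ≠ 0 := by linarith
        have e3 : o.1 - a.1 ≠ 0 := by linarith
        have e4 : (0:ℚ) < 1 - a.1/o.1 := by rw [sub_pos, div_lt_one ob1]; exact hao
        simp only [divO, subO]; field_simp; try ring)
    · have hao : a.1 < o.1 := hab.trans_eq hbo
      have h2 : (subO b a hab).1 = (subO o a hao).1 := by simp only [subO, hbo]
      rw [splitL_glue_eq hbo, splitR_glue_lt hao, splitL_glue_eq h2]
      congr 1
      exact OO.ext (by simp only [divO, hbo])
    · rw [splitL_glue_gt hbo]
      rcases lt_trichotomy a.1 o.1 with hao | hao | hao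
      · have h1 : (divO a b hab).1 < (divO o b hbo).1 := by
          simp only [divO]; rw [div_lt_div_iff₀ (by positivity) (by positivity)]; nlinarith
        have h2 : (subO o a hao).1 < (subO b a hab).1 := by
          simp only [subO]; rw [div_lt_div_iff₀ (by linarith) (by linarith)]; nlinarith
        rw [splitR_glue_lt h1, splitR_glue_lt hao, splitL_glue_gt h2]
        have hb0 : b.1 ≠ 0 := ne_of_gt bb1
        have h1a : (1:ℚ) - a.1 ≠ 0 := by linarith
        have h1o : (1:ℚ) - o.1 ≠ 0 := by linarith
        have hba : b.1 - a.1 ≠ 0 := by linarith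
        have hoa : o.1 - a.1 ≠ 0 := by linarith
        have e4 : (0:ℚ) < 1 - a.1/b.1 := by rw [sub_pos, div_lt_one bb1]; exact hab
        have e5 : (0:ℚ) < 1 - (o.1 - a.1)/(1 - a.1) := by
          rw [sub_pos, div_lt_one (by linarith)]; linarith
        congr 1
        · exact OO.ext (by simp only [divO, subO]; field_simp; try ring)
        · congr 1
          exact OO.ext (by simp only [divO]; field_simp)
        · congr 1
          exact OO.ext (by simp only [subO]; field_simp; ring_nf; field_simp; ring)
      · have h1 : (divO a b hab).1 = (divO o b hbo).1 := by simp only [divO, hao]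
        rw [splitR_glue_eq h1, splitR_glue_eq hao]
        congr 1
        exact OO.ext (by simp only [subO, hao])
      · have h1 : (divO o b hbo).1 < (divO a b hab).1 := by
          simp only [divO]; rw [div_lt_div_iff₀ (by positivity) (by positivity)]; nlinarith
        have h3 : (subO a o hao).1 < (subO b o hbo).1 := by
          simp only [subO]; rw [div_lt_div_iff₀ (by linarith) (by linarith)]; nlinarith
        rw [splitR_glue_gt h1, splitR_glue_gt hao,
          show subO (divO a b hab) (divO o b hbo) h1 = divO (subO a o hao) (subO b o hbo) h3
            from OO.ext (by
              have hb0 : b.1 ≠ 0 := ne_of_gt bb1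
              have h1o : (1:ℚ) - o.1 ≠ 0 := by linarith
              have hbo0 : b.1 - o.1 ≠ 0 := by linarith
              have e4 : (0:ℚ) < 1 - o.1/b.1 := by rw [sub_pos, div_lt_one bb1]; exact hbo
              simp only [divO, subO]; field_simp; try ring),
          splitR_splitL hr]
        congr 1
        exact OO.ext (by
          have h1o : (1:ℚ) - o.1 ≠ 0 := by linarith
          have e3 : (0:ℚ) < 1 - (a.1 - o.1)/(1 - o.1) := by
            rw [sub_pos, div_lt_one (by linarith)]; linarith
          simp only [subO]; field_simp; try ring)

end S
namespace S
variable {X Y : Type}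

lemma liftRel_const_const {R : X → Y → Prop} {x : X} {y : Y} :
    liftRel R (const x) (const y) ↔ R x y := Iff.rfl

lemma liftRel_glue_left {R : X → Y → Prop} {o : OO} {fl fr : S X} {g : S Y} :
    liftRel R (glue o fl fr) g ↔ liftRel R fl (splitL g o) ∧ liftRel R fr (splitR g o) :=
  Iff.rfl

lemma liftRel_const_glue {R : X → Y → Prop} {x : X} {o : OO} {gl gr : S Y} :
    liftRel R (const x) (glue o gl gr) ↔ liftRel R (const x) gl ∧ liftRel R (const x) gr :=
  Iff.rfl

lemma liftRel_glue_right {R : X → Y → Prop} : ∀ (f : S X) {o : OO} {gl gr : S Y},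
    liftRel R f (glue o gl gr) ↔ liftRel R (splitL f o) gl ∧ liftRel R (splitR f o) gr
  | const x, o, gl, gr => Iff.rfl
  | glue p fl fr, o, gl, gr => by
    rw [liftRel_glue_left]
    rcases lt_trichotomy p.1 o.1 with h | h | h
    · rw [splitL_glue_lt h, splitR_glue_lt h, liftRel_glue_right fr,
        splitL_glue_gt h, splitR_glue_gt h, liftRel_glue_left]
      tauto
    · rw [splitL_glue_eq h, splitR_glue_eq h,
        splitL_glue_eq h.symm (f := fl), splitR_glue_eq h.symm (f := fl)]
    · rw [splitL_glue_gt h, splitR_glue_gt h, liftRel_glue_right fl,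
        splitL_glue_lt h, splitR_glue_lt h, liftRel_glue_left]
      tauto

lemma liftRel_const_split {R : X → Y → Prop} (x : X) : ∀ (g : S Y) (a : OO),
    liftRel R (const x) g ↔ liftRel R (const x) (splitL g a) ∧ liftRel R (const x) (splitR g a)
  | const y, a => by simp [liftRel_const_const]
  | glue o gl gr, a => by
    rw [liftRel_const_glue]
    rcases lt_trichotomy a.1 o.1 with h | h | h
    · rw [splitL_glue_lt h, splitR_glue_lt h, liftRel_const_glue,
        liftRel_const_split x gl (divO a o h)]
      tauto
    · rw [splitL_glue_eq h, splitR_glue_eq h]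
    · rw [splitL_glue_gt h, splitR_glue_gt h, liftRel_const_glue,
        liftRel_const_split x gr (subO a o h)]
      tauto

lemma liftRel_split {R : X → Y → Prop} : ∀ (f : S X) (g : S Y) (a : OO),
    liftRel R f g ↔ liftRel R (splitL f a) (splitL g a) ∧ liftRel R (splitR f a) (splitR g a)
  | const x, g, a => by rw [splitL_const, splitR_const]; exact liftRel_const_split x g a
  | glue q fl fr, g, a => by
    rw [liftRel_glue_left]
    rcases lt_trichotomy a.1 q.1 with h | h | h
    · rw [splitL_glue_lt h, splitR_glue_lt h, liftRel_glue_left,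
        liftRel_split fl (splitL g q) (divO a q h), splitL_splitL g h,
        splitR_splitL g h, splitR_splitR g h]
      tauto
    · obtain rfl : a = q := OO.ext h
      rw [splitL_glue_eq rfl, splitR_glue_eq rfl]
    · rw [splitL_glue_gt h, splitR_glue_gt h, liftRel_glue_left,
        liftRel_split fr (splitR g q) (subO a q h), splitR_splitR g h,
        ← splitR_splitL g h, splitL_splitL g h]
      tauto

lemma liftRel_refl {R : X → X → Prop} (hR : ∀ x, R x x) : ∀ f, liftRel R f f
  | const x => hR x
  | glue o fl fr => by
    rw [liftRel_glue_left, splitL_glue_eq rfl, splitR_glue_eq rfl]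
    exact ⟨liftRel_refl hR fl, liftRel_refl hR fr⟩

lemma liftRel_mono {R R' : X → Y → Prop} (hRR : ∀ x y, R x y → R' x y) :
    ∀ f g, liftRel R f g → liftRel R' f g
  | const x, const y, h => hRR _ _ h
  | const x, glue o gl gr, h => by
    rw [liftRel_const_glue] at h ⊢
    exact ⟨liftRel_mono hRR _ _ h.1, liftRel_mono hRR _ _ h.2⟩
  | glue o fl fr, g, h => by
    rw [liftRel_glue_left] at h ⊢
    exact ⟨liftRel_mono hRR _ _ h.1, liftRel_mono hRR _ _ h.2⟩

lemma liftRel_flip {R : X → Y → Prop} : ∀ (f : S X) (g : S Y),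
    liftRel R f g → liftRel (fun y x => R x y) g f
  | const x, const y, h => h
  | const x, glue o gl gr, h => by
    rw [liftRel_const_glue] at h
    rw [liftRel_glue_left, splitL_const, splitR_const]
    exact ⟨liftRel_flip _ _ h.1, liftRel_flip _ _ h.2⟩
  | glue o fl fr, g, h => by
    rw [liftRel_glue_left] at h
    rw [liftRel_glue_right g]
    exact ⟨liftRel_flip _ _ h.1, liftRel_flip _ _ h.2⟩

lemma liftRel_trans_const {r : X → X → Prop} (hr : Transitive r) (y : X) :
    ∀ (f h : S X), liftRel r f (const y) → liftRel r (const y) h → liftRel r f h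
  | const x, h, h1, h2 =>
    liftRel_mono (R := fun _ b => r y b) (R' := fun _ b => r x b)
      (fun _ b hb => hr h1 hb) (const y) h h2
  | glue q fl fr, h, h1, h2 => by
    rw [liftRel_glue_left, splitL_const, splitR_const] at h1
    rw [liftRel_glue_left]
    have h2' := (liftRel_const_split y h q).1 h2
    exact ⟨liftRel_trans_const hr y fl _ h1.1 h2'.1,
           liftRel_trans_const hr y fr _ h1.2 h2'.2⟩

lemma liftRel_trans {r : X → X → Prop} (hr : Transitive r) :
    ∀ (g f h : S X), liftRel r f g → liftRel r g h → liftRel r f h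
  | const y, f, h, h1, h2 => liftRel_trans_const hr y f h h1 h2
  | glue p gl gr, f, h, h1, h2 => by
    rw [liftRel_glue_right f] at h1
    rw [liftRel_glue_left] at h2
    rw [liftRel_split f h p]
    exact ⟨liftRel_trans hr gl _ _ h1.1 h2.1, liftRel_trans hr gr _ _ h1.2 h2.2⟩

end S



/-- Lifting an equivalence relation (a setoid structure) on `X` to step functions
yields an equivalence relation on `S X`. -/
theorem liftRel_equivalence {X : Type} (r : X → X → Prop) (hr : Equivalence r) :
    Equivalence (fun f g : S X => liftRel r f g) := by
  constructor
  · exact fun f => liftRel_refl (fun x => hr.refl x) f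
  · exact fun {f g} h => liftRel_mono (fun a b hab => hr.symm hab) _ _ (liftRel_flip f g h)
  · have ht : Transitive r := fun {a b c} ha hb => hr.trans ha hb
    exact fun {f g h} h1 h2 => liftRel_trans ht g f h h1 h2
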